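/- Let $1 < p \leq 2$ and let $(\lambda_k)$ be a positive, non-increasing sequence with partial sums $\Lambda_k = \sum_{i=1}^k \lambda_i$. Then for every $k \geq 1$, $\frac{\Lambda_{k+1}^p - \Lambda_k^p}{\lambda_{k+1} \Lambda_{k+1}^{p-1}} \leq \frac{\Lambda_{k+2}^p - \Lambda_{k+1}^p}{\lambda_{k+2} \Lambda_{k+2}^{p-1}}$. -/

import Mathlib

private lemma young3 {p w : ℝ} (hp : 1 < p) (hw : 0 ≤ w) :
    p * w ^ (p - 1) ≤ 1 + (p - 1) * w ^ p := by
  have hp0 : (0:ℝ) < p := by linarith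
  have hpm : p - 1 ≠ 0 := by linarith
  have hpq : (p / (p - 1)).HolderConjugate p := by
    exact ((Real.holderConjugate_iff_eq_conjExponent hp).mpr rfl).symm
  have h := Real.young_inequality_of_nonneg (Real.rpow_nonneg hw (p - 1)) zero_le_one hpq
  rw [mul_one, Real.one_rpow] at h
  have h1 : (w ^ (p - 1)) ^ (p / (p - 1)) = w ^ p := by
    rw [← Real.rpow_mul hw]; congr 1; field_simp
  rw [h1] at h
  have h2 : p * (w ^ (p - 1)) ≤ p * (w ^ p / (p / (p - 1)) + 1 / p) :=
    mul_le_mul_of_nonneg_left h hp0.le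
  have h3 : p * (w ^ p / (p / (p - 1)) + 1 / p) = 1 + (p - 1) * w ^ p := by
    field_simp; ring
  linarith

private lemma phi_anti {p : ℝ} (hp : 1 < p) :
    AntitoneOn (fun x : ℝ => (1 - (1 - x) ^ p) / x) (Set.Ioc 0 1) := by
  have hd : ∀ x : ℝ, x ≠ 0 →
      HasDerivAt (fun x : ℝ => (1 - (1 - x) ^ p) / x)
        ((p * (1 - x) ^ (p - 1) * x - (1 - (1 - x) ^ p) * 1) / x ^ 2) x := by
    intro x hx
    have h1 : HasDerivAt (fun x : ℝ => 1 - x) (-1) x := by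
      simpa using (hasDerivAt_id' x).const_sub (1:ℝ)
    have h2 : HasDerivAt (fun y : ℝ => y ^ p) (p * (1 - x) ^ (p - 1)) (1 - x) :=
      Real.hasDerivAt_rpow_const (Or.inr hp.le)
    have h3 : HasDerivAt (fun x : ℝ => (1 - x) ^ p) (p * (1 - x) ^ (p - 1) * (-1)) x :=
      h2.comp x h1
    have h4 : HasDerivAt (fun x : ℝ => 1 - (1 - x) ^ p) (p * (1 - x) ^ (p - 1)) x := by
      simpa using h3.const_sub (1:ℝ)
    exact h4.div (hasDerivAt_id' x) hx
  apply antitoneOn_of_deriv_nonpos (convex_Ioc 0 1)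
  · intro x hx
    exact ((hd x (ne_of_gt hx.1)).differentiableAt.continuousAt).continuousWithinAt
  · rw [interior_Ioc]
    intro x hx
    exact ((hd x (ne_of_gt hx.1)).differentiableAt).differentiableWithinAt
  · rw [interior_Ioc]
    intro x hx
    rw [(hd x (ne_of_gt hx.1)).deriv]
    apply div_nonpos_of_nonpos_of_nonneg _ (sq_nonneg x)
    have hw : (0:ℝ) ≤ 1 - x := by linarith [hx.2]
    have hy := young3 hp hw
    have hmul : (1 - x) ^ (p - 1) * (1 - x) = (1 - x) ^ p := by
      rcases eq_or_lt_of_le hw with h | h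
      · rw [← h, mul_zero, Real.zero_rpow (by linarith)]
      · rw [← Real.rpow_add_one (ne_of_gt h)]; ring_nf
    nlinarith [Real.rpow_nonneg hw (p - 1), hx.1.le]

private lemma ratio_eq {p A a : ℝ} (hA : 0 < A) (ha : 0 < a) :
    ((A + a) ^ p - A ^ p) / (a * (A + a) ^ (p - 1)) =
      (1 - (1 - a / (A + a)) ^ p) / (a / (A + a)) := by
  have hB : 0 < A + a := by linarith
  have h1 : 1 - a / (A + a) = A / (A + a) := by field_simp; ring
  rw [h1, Real.div_rpow hA.le hB.le]
  have h2 : (A + a) ^ (p - 1) = (A + a) ^ p / (A + a) := Real.rpow_sub_one hB.ne' p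
  rw [h2]
  have hBp : (0:ℝ) < (A + a) ^ p := Real.rpow_pos_of_pos hB p
  field_simp

theorem diff_ratio_monotone (p : ℝ) (hp1 : 1 < p) (hp2 : p ≤ 2) (lam : ℕ → ℝ)
    (hpos : ∀ k, 1 ≤ k → 0 < lam k) (hmono : ∀ k, 1 ≤ k → lam (k + 1) ≤ lam k)
    (Lam : ℕ → ℝ) (hLam : ∀ k, Lam k = ∑ i ∈ Finset.Icc 1 k, lam i) :
    ∀ k, 1 ≤ k →
      (Lam (k + 1) ^ p - Lam k ^ p) / (lam (k + 1) * Lam (k + 1) ^ (p - 1)) ≤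
        (Lam (k + 2) ^ p - Lam (k + 1) ^ p) / (lam (k + 2) * Lam (k + 2) ^ (p - 1)) := by
  intro k hk
  have hA : 0 < Lam k := by
    rw [hLam]
    apply Finset.sum_pos
    · intro i hi
      exact hpos i (Finset.mem_Icc.mp hi).1
    · exact Finset.nonempty_Icc.mpr hk
  have ha : 0 < lam (k + 1) := hpos _ (by omega)
  have hb : 0 < lam (k + 2) := hpos _ (by omega)
  have hba : lam (k + 2) ≤ lam (k + 1) := hmono (k + 1) (by omega)
  have hstep1 : Lam (k + 1) = Lam k + lam (k + 1) := by
    rw [hLam, hLam, Finset.sum_Icc_succ_top (by omega : 1 ≤ k + 1)]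
  have hstep2 : Lam (k + 2) = Lam (k + 1) + lam (k + 2) := by
    rw [hLam, hLam, Finset.sum_Icc_succ_top (by omega : 1 ≤ k + 2)]
  have hB : 0 < Lam (k + 1) := by rw [hstep1]; linarith
  have hC : 0 < Lam (k + 2) := by rw [hstep2]; linarith
  have hL : (Lam (k + 1) ^ p - Lam k ^ p) / (lam (k + 1) * Lam (k + 1) ^ (p - 1)) =
      (1 - (1 - lam (k + 1) / Lam (k + 1)) ^ p) / (lam (k + 1) / Lam (k + 1)) := by
    rw [hstep1]; exact ratio_eq hA ha
  have hR : (Lam (k + 2) ^ p - Lam (k + 1) ^ p) / (lam (k + 2) * Lam (k + 2) ^ (p - 1)) =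
      (1 - (1 - lam (k + 2) / Lam (k + 2)) ^ p) / (lam (k + 2) / Lam (k + 2)) := by
    rw [hstep2]; exact ratio_eq hB hb
  rw [hL, hR]
  have hu : lam (k + 1) / Lam (k + 1) ∈ Set.Ioc (0:ℝ) 1 := by
    constructor
    · positivity
    · rw [div_le_one hB, hstep1]; linarith
  have hv : lam (k + 2) / Lam (k + 2) ∈ Set.Ioc (0:ℝ) 1 := by
    constructor
    · positivity
    · rw [div_le_one hC, hstep2]; linarith
  have hvu : lam (k + 2) / Lam (k + 2) ≤ lam (k + 1) / Lam (k + 1) := by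
    apply div_le_div₀ (le_of_lt ha) hba hB
    rw [hstep2]; linarith
  exact phi_anti hp1 hv hu hvu
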